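/- Let k ≤ n-1 be positive integers, p a prime, and e ≥ 1. The number h_{n,k}(p^e) of subrings R ⊆ Z^n with [Z^n : R] = p^e and corank exactly k satisfies binomial(n-1,k)·g_{k+1}(p^e) ≤ h_{n,k}(p^e) ≤ (n-k)^k·binomial(n-1,k)·g_{k+1}(p^e), where g_{k+1}(p^e) is the number of irreducible subrings of Z^{k+1} of index p^e. -/

import Mathlib

def colSpan {n : ℕ} (A : Matrix (Fin n) (Fin n) ℤ) : AddSubgroup (Fin n → ℤ) :=
  AddSubgroup.closure (Set.range fun j => fun i => A i j)

def IsSubringOf {n : ℕ} (R : AddSubgroup (Fin n → ℤ)) : Prop :=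
  (fun _ => (1 : ℤ)) ∈ R ∧ ∀ u v : Fin n → ℤ, u ∈ R → v ∈ R → u * v ∈ R

def IsHNF {n : ℕ} (A : Matrix (Fin n) (Fin n) ℤ) : Prop :=
  (∀ i j : Fin n, (j : ℕ) < (i : ℕ) → A i j = 0) ∧
  (∀ i j : Fin n, (i : ℕ) < (j : ℕ) → 0 ≤ A i j ∧ A i j < A i i)

def IsSubringMatrix {n : ℕ} (A : Matrix (Fin n) (Fin n) ℤ) : Prop :=
  IsHNF A ∧ A.det ≠ 0 ∧ IsSubringOf (colSpan A)

def GenLE {n : ℕ} (R : AddSubgroup (Fin n → ℤ)) (k : ℕ) : Prop :=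
  ∃ S : Finset ((Fin n → ℤ) ⧸ R), S.card ≤ k ∧
    AddSubgroup.closure (S : Set ((Fin n → ℤ) ⧸ R)) = ⊤

def RankGe {n : ℕ} (R : AddSubgroup (Fin n → ℤ)) (k : ℕ) : Prop :=
  ∀ S : Finset ((Fin n → ℤ) ⧸ R),
    AddSubgroup.closure (S : Set ((Fin n → ℤ) ⧸ R)) = ⊤ → k ≤ S.card

def RankEq {n : ℕ} (R : AddSubgroup (Fin n → ℤ)) (k : ℕ) : Prop :=
  GenLE R k ∧ RankGe R k

open AddSubgroup Finset
open scoped Classical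

namespace CK

variable {N : ℕ}

/-- the congruence relation on coordinates -/
def Rel (p : ℕ) (R : AddSubgroup (Fin N → ℤ)) (i j : Fin N) : Prop :=
  ∀ v ∈ R, (p : ℤ) ∣ v i - v j

lemma rel_refl (p : ℕ) (R : AddSubgroup (Fin N → ℤ)) (i : Fin N) : Rel p R i i :=
  fun v _ => by simp

lemma Rel.symm {p : ℕ} {R : AddSubgroup (Fin N → ℤ)} {i j : Fin N}
    (h : Rel p R i j) : Rel p R j i := fun v hv =>
  dvd_sub_comm.mp (h v hv)

lemma Rel.trans {p : ℕ} {R : AddSubgroup (Fin N → ℤ)} {i j l : Fin N}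
    (h : Rel p R i j) (h' : Rel p R j l) : Rel p R i l := fun v hv => by
  have := dvd_add (h v hv) (h' v hv); rwa [sub_add_sub_cancel] at this

variable {p e : ℕ} {R : AddSubgroup (Fin N → ℤ)}

lemma one_mem (hR : IsSubringOf R) : (1 : Fin N → ℤ) ∈ R := hR.1

lemma pow_mem (hR : IsSubringOf R) {v : Fin N → ℤ} (hv : v ∈ R) (t : ℕ) : v ^ t ∈ R := by
  induction t with
  | zero => simpa using one_mem hR
  | succ t ih => rw [pow_succ]; exact hR.2 _ _ ih hv

lemma const_mem (hR : IsSubringOf R) (c : ℤ) : (fun _ => c : Fin N → ℤ) ∈ R := by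
  have := R.zsmul_mem (one_mem hR) c
  convert this using 1
  funext m; simp

/-- anything divisible coordinatewise by the index is in R -/
lemma index_dvd_mem {w : Fin N → ℤ} (hw : ∀ m, (R.index : ℤ) ∣ w m) : w ∈ R := by
  have h := AddSubgroup.nsmul_index_mem R (fun m => w m / R.index)
  convert h using 1
  funext m
  simp only [Pi.smul_apply, nsmul_eq_mul]
  exact (Int.mul_ediv_cancel' (hw m)).symm

/-- Euler: if p does not divide x then x^(e*φ(p^e)) ≡ 1 mod p^e -/
lemma pow_eq_one_mod (hp : p.Prime) {x : ℤ} (hx : ¬ (p : ℤ) ∣ x) :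
    ((p : ℤ) ^ e) ∣ x ^ (e * (p ^ e).totient) - 1 := by
  rcases Nat.eq_zero_or_pos e with rfl | he0
  · simp
  have hp0 : (0:ℤ) < (p:ℤ)^e := pow_pos (by exact_mod_cast hp.pos) e
  set n : ℤ := (p:ℤ)^e with hn
  have hxr : x ≡ x % n [ZMOD n] := (Int.emod_emod_of_dvd x dvd_rfl).symm
  set r : ℤ := x % n with hr
  have hr0 : 0 ≤ r := Int.emod_nonneg x (ne_of_gt hp0)
  have hpr : ¬ (p:ℤ) ∣ r := by
    intro hc
    apply hx
    have h1 : (p:ℤ) ∣ x - r := by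
      have hpn : (p:ℤ) ∣ n := hn ▸ dvd_pow_self _ he0.ne'
      exact dvd_trans hpn (Int.ModEq.dvd hxr.symm)
    have := dvd_add h1 hc
    rwa [sub_add_cancel] at this
  set m : ℕ := r.toNat with hm
  have hmr : (m : ℤ) = r := Int.toNat_of_nonneg hr0
  have hpm : ¬ p ∣ m := by
    intro hc; apply hpr; rw [← hmr]; exact_mod_cast Int.natCast_dvd_natCast.mpr hc
  have hcop : m.Coprime (p ^ e) :=
    (Nat.coprime_pow_right_iff he0 _ _).mpr
      (Nat.coprime_comm.mp ((hp.coprime_iff_not_dvd).mpr hpm))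
  have heuler : m ^ (p ^ e).totient ≡ 1 [MOD p ^ e] := Nat.ModEq.pow_totient hcop
  have h2 : m ^ (e * (p ^ e).totient) ≡ 1 [MOD p ^ e] := by
    have := heuler.pow e
    rwa [← pow_mul, one_pow, mul_comm] at this
  have h3 : (m : ℤ) ^ (e * (p ^ e).totient) ≡ 1 [ZMOD n] := by
    have := Int.natCast_modEq_iff.mpr h2
    push_cast at this ⊢
    exact this
  have h4 : x ^ (e * (p ^ e).totient) ≡ 1 [ZMOD n] :=
    ((hxr.pow _).trans (by rw [hmr] at h3; exact h3))
  have h5 := h4.dvd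
  rw [hn] at h5
  have := (dvd_neg.mpr h5)
  simpa using this

lemma pow_eq_zero_mod (he : 1 ≤ e) (hp : p.Prime) {x : ℤ} (hx : (p : ℤ) ∣ x) :
    ((p : ℤ) ^ e) ∣ x ^ (e * (p ^ e).totient) := by
  have hpe : 1 ≤ (p^e).totient := Nat.totient_pos.mpr (pow_pos hp.pos e)
  have h1 : e ≤ e * (p ^ e).totient := Nat.le_mul_of_pos_right e hpe
  exact dvd_trans (pow_dvd_pow _ h1) (pow_dvd_pow_of_dvd hx _)

/-- indicator function of the class of i -/
noncomputable def ind (p : ℕ) (R : AddSubgroup (Fin N → ℤ)) (i : Fin N) : Fin N → ℤ :=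
  fun m => if Rel p R m i then 1 else 0

lemma ind_mem (hp : p.Prime) (he : 1 ≤ e) (hR : IsSubringOf R) (hidx : R.index = p ^ e)
    (i : Fin N) : ind p R i ∈ R := by
  have hpe1 : ((R.index : ℤ)) = (p:ℤ)^e := by rw [hidx]; push_cast; ring
  set Λ := e * (p ^ e).totient with hΛ
  -- total witness function
  have hw : ∀ j : Fin N, ∃ w, w ∈ R ∧ (¬ Rel p R i j →
      (∀ m, Rel p R m i → ((p:ℤ)^e) ∣ w m - 1) ∧ (∀ m, Rel p R m j → ((p:ℤ)^e) ∣ w m)) := by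
    intro j
    by_cases hj : Rel p R i j
    · exact ⟨1, one_mem hR, fun hc => absurd hj hc⟩
    · have hj' := hj
      unfold Rel at hj'
      push_neg at hj'
      obtain ⟨v, hv, hvij⟩ := hj'
      refine ⟨(v - (fun _ => v j)) ^ Λ,
        pow_mem hR (R.sub_mem hv (const_mem hR (v j))) Λ, fun _ => ⟨?_, ?_⟩⟩
      · intro m hm
        have hpm : ¬ (p:ℤ) ∣ v m - v j := by
          intro hc
          have h1 : (p:ℤ) ∣ v m - v i := hm v hv
          apply hvij
          have h2 := dvd_sub hc h1
          have h3 : v m - v j - (v m - v i) = v i - v j := by ring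
          rwa [h3] at h2
        have h4 := pow_eq_one_mod (e := e) hp hpm
        simpa using h4
      · intro m hm
        have hpm : (p:ℤ) ∣ v m - v j := hm v hv
        have h4 := pow_eq_zero_mod (e := e) he hp hpm
        simpa using h4
  choose w hwR hwspec using hw
  set J := univ.filter (fun j => ¬ Rel p R i j) with hJ
  set u : Fin N → ℤ := ∏ j ∈ J, w j with hu
  have huR : u ∈ R := by
    apply Finset.prod_induction _ (· ∈ R) (fun a b ha hb => hR.2 a b ha hb) (one_mem hR)
    exact fun j _ => hwR j
  have hui : ∀ m, Rel p R m i → ((p:ℤ)^e) ∣ u m - 1 := by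
    intro m hm
    have hcast : ((u m - 1 : ℤ) : ZMod (p^e)) = 0 := by
      push_cast
      have hum : (u m : ZMod (p^e)) = ∏ j ∈ J, ((w j m : ℤ) : ZMod (p^e)) := by
        rw [hu, Finset.prod_apply]; push_cast; rfl
      rw [hum, Finset.prod_congr rfl (fun j hj => ?_), Finset.prod_const_one]
      · ring
      · have hj : ¬ Rel p R i j := by simpa [hJ] using hj
        have := (hwspec j hj).1 m hm
        have : ((w j m - 1 : ℤ) : ZMod (p^e)) = 0 := by
          rw [ZMod.intCast_zmod_eq_zero_iff_dvd]
          push_cast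
          exact this
        push_cast at this
        linear_combination this
    rw [ZMod.intCast_zmod_eq_zero_iff_dvd] at hcast
    push_cast at hcast
    exact hcast
  have hu0 : ∀ m, ¬ Rel p R m i → ((p:ℤ)^e) ∣ u m := by
    intro m hm
    have hmJ : m ∈ J := by simp [hJ]; exact fun hc => hm (Rel.symm hc)
    have h1 : ((p:ℤ)^e) ∣ w m m := (hwspec m (by simpa [hJ] using hmJ)).2 m (rel_refl p R m)
    have h2 : w m m ∣ u m := by
      rw [hu, Finset.prod_apply]
      exact Finset.dvd_prod_of_mem (fun j => w j m) hmJ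
    exact dvd_trans h1 h2
  have hsub : u - ind p R i ∈ R := by
    apply index_dvd_mem
    intro m
    rw [hpe1]
    by_cases hm : Rel p R m i
    · simpa [ind, hm] using hui m hm
    · simpa [ind, hm] using hu0 m hm
  have : ind p R i = u - (u - ind p R i) := by ring
  rw [this]
  exact R.sub_mem huR hsub

/-- the class of i as a finset -/
noncomputable def cls (p : ℕ) (R : AddSubgroup (Fin N → ℤ)) (i : Fin N) : Finset (Fin N) :=
  univ.filter (fun j => Rel p R i j)

lemma mem_cls {i j : Fin N} : j ∈ cls p R i ↔ Rel p R i j := by simp [cls]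

lemma cls_nonempty (i : Fin N) : (cls p R i).Nonempty :=
  ⟨i, mem_cls.mpr (rel_refl p R i)⟩

noncomputable def piv (p : ℕ) (R : AddSubgroup (Fin N → ℤ)) (i : Fin N) : Fin N :=
  (cls p R i).max' (cls_nonempty i)

lemma rel_piv (i : Fin N) : Rel p R i (piv p R i) :=
  mem_cls.mp ((cls p R i).max'_mem (cls_nonempty i))

lemma cls_eq_of_rel {i j : Fin N} (h : Rel p R i j) : cls p R i = cls p R j := by
  ext l; simp only [mem_cls]
  exact ⟨fun h' => h.symm.trans h', fun h' => h.trans h'⟩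

lemma piv_eq_of_rel {i j : Fin N} (h : Rel p R i j) : piv p R i = piv p R j := by
  unfold piv; congr 1; exact cls_eq_of_rel h

lemma piv_piv (i : Fin N) : piv p R (piv p R i) = piv p R i :=
  (piv_eq_of_rel (rel_piv i)).symm

lemma rel_iff_piv_eq {i j : Fin N} : Rel p R i j ↔ piv p R i = piv p R j := by
  constructor
  · exact piv_eq_of_rel
  · intro h
    exact (rel_piv i).trans (h ▸ (rel_piv j).symm)

noncomputable def pivSet (p : ℕ) (R : AddSubgroup (Fin N → ℤ)) : Finset (Fin N) :=
  univ.filter (fun i => piv p R i = i)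

noncomputable def Aset (p : ℕ) (R : AddSubgroup (Fin N → ℤ)) : Finset (Fin N) :=
  univ.filter (fun i => piv p R i ≠ i)

lemma piv_mem_pivSet (i : Fin N) : piv p R i ∈ pivSet p R := by
  simp [pivSet, piv_piv]

lemma piv_not_mem_Aset (i : Fin N) : piv p R i ∉ Aset p R := by
  simp [Aset, piv_piv]

/-- mask of v on the class of i -/
noncomputable def mask (p : ℕ) (R : AddSubgroup (Fin N → ℤ)) (i : Fin N) (v : Fin N → ℤ) :
    Fin N → ℤ := fun m => if Rel p R m i then v m else 0

lemma mask_eq_mul (i : Fin N) (v : Fin N → ℤ) : mask p R i v = v * ind p R i := by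
  funext m; simp only [mask, ind, Pi.mul_apply, mul_ite, mul_one, mul_zero]

lemma mask_mem (hp : p.Prime) (he : 1 ≤ e) (hR : IsSubringOf R) (hidx : R.index = p ^ e)
    {v : Fin N → ℤ} (hv : v ∈ R) (i : Fin N) : mask p R i v ∈ R := by
  rw [mask_eq_mul]; exact hR.2 _ _ hv (ind_mem hp he hR hidx i)

lemma key_ite (m : Fin N) {i : Fin N} (hi : i ∈ pivSet p R) (c : Fin N → ℤ) :
    (if Rel p R m i then c i else 0) = if i = piv p R m then c i else 0 := by
  have hpi : piv p R i = i := by simpa [pivSet] using hi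
  have : Rel p R m i ↔ i = piv p R m := by
    rw [rel_iff_piv_eq, hpi, eq_comm]
  simp only [this]

lemma sum_mask (v : Fin N → ℤ) : ∑ i ∈ pivSet p R, mask p R i v = v := by
  funext m
  rw [Finset.sum_apply]
  have h1 : ∀ i ∈ pivSet p R, mask p R i v m = if i = piv p R m then v m else 0 := by
    intro i hi
    have := key_ite m hi (fun _ => v m)
    simpa [mask] using this
  rw [Finset.sum_congr rfl h1, Finset.sum_ite_eq' (pivSet p R) (piv p R m) (fun _ => v m),
    if_pos (piv_mem_pivSet m)]

lemma sum_smul_ind_apply (v : Fin N → ℤ) (m : Fin N) :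
    (∑ i ∈ pivSet p R, v i • ind p R i) m = v (piv p R m) := by
  rw [Finset.sum_apply]
  have h1 : ∀ i ∈ pivSet p R, (v i • ind p R i) m = if i = piv p R m then v i else 0 := by
    intro i hi
    have := key_ite m hi v
    simpa [ind, Pi.smul_apply, smul_eq_mul, mul_ite] using this
  rw [Finset.sum_congr rfl h1, Finset.sum_ite_eq' (pivSet p R) (piv p R m) v,
    if_pos (piv_mem_pivSet m)]

/-- the key rank computation -/
lemma rankEq_Aset_card (hp : p.Prime) (he : 1 ≤ e) (hR : IsSubringOf R)
    (hidx : R.index = p ^ e) : RankEq R (Aset p R).card := by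
  constructor
  · -- GenLE
    set gens : Set (Fin N → ℤ) := (fun i => Pi.single i (1:ℤ)) '' ↑(Aset p R) with hgens
    refine ⟨(Aset p R).image (fun i => (QuotientAddGroup.mk (Pi.single i (1:ℤ)) : (Fin N → ℤ) ⧸ R)),
      Finset.card_image_le, ?_⟩
    have key : ∀ v : Fin N → ℤ, ∃ s ∈ AddSubgroup.closure gens, ∃ r ∈ R, v = s + r := by
      intro v
      refine ⟨(∑ i ∈ Aset p R, (v i - v (piv p R i)) • Pi.single i (1:ℤ) : Fin N → ℤ), ?_,
        (∑ i ∈ pivSet p R, v i • ind p R i : Fin N → ℤ), ?_, ?_⟩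
      · refine sum_mem (fun i hi => zsmul_mem (AddSubgroup.subset_closure ?_) _)
        exact ⟨i, by simpa using hi, rfl⟩
      · exact sum_mem (fun i _ => R.zsmul_mem (ind_mem hp he hR hidx i) _)
      · funext m
        rw [Pi.add_apply, sum_smul_ind_apply, Finset.sum_apply]
        have h1 : ∀ i ∈ Aset p R, ((v i - v (piv p R i)) • (Pi.single i (1:ℤ) : Fin N → ℤ)) m
            = if i = m then v i - v (piv p R i) else 0 := by
          intro i _
          by_cases him : i = m <;> simp [him, Pi.single_apply]
        rw [Finset.sum_congr rfl h1, Finset.sum_ite_eq' (Aset p R) m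
          (fun i => v i - v (piv p R i))]
        by_cases hm : m ∈ Aset p R
        · simp only [hm, if_pos]; ring
        · have hpm : piv p R m = m := by simpa [Aset] using hm
          simp [hm, hpm]
    rw [Finset.coe_image, eq_top_iff]
    rintro q -
    obtain ⟨v, rfl⟩ := QuotientAddGroup.mk_surjective q
    obtain ⟨s, hs, r, hr, hv⟩ := key v
    have h2 : (QuotientAddGroup.mk v : (Fin N → ℤ) ⧸ R) = QuotientAddGroup.mk s := by
      rw [hv, QuotientAddGroup.mk_add,
        show (QuotientAddGroup.mk r : (Fin N → ℤ) ⧸ R) = 0 from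
          (QuotientAddGroup.eq_zero_iff r).mpr hr, add_zero]
    rw [h2]
    have h3 : (QuotientAddGroup.mk s : (Fin N → ℤ) ⧸ R) ∈
        AddSubgroup.map (QuotientAddGroup.mk' R) (AddSubgroup.closure gens) :=
      ⟨s, hs, rfl⟩
    rw [AddMonoidHom.map_closure, hgens, Set.image_image] at h3
    simpa using h3
  · -- RankGe
    intro Q hQ
    haveI : Fact p.Prime := ⟨hp⟩
    set A := Aset p R with hA
    set ψ : (Fin N → ℤ) →+ (↥A → ZMod p) := AddMonoidHom.mk'
      (fun v a => ((v a.1 - v (piv p R a.1) : ℤ) : ZMod p))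
      (by intro u v; funext a; simp only [Pi.add_apply]; push_cast; ring) with hψ
    have hker : ∀ v ∈ R, ψ v = 0 := by
      intro v hv
      funext a
      have : ((v a.1 - v (piv p R a.1) : ℤ) : ZMod p) = 0 := by
        rw [ZMod.intCast_zmod_eq_zero_iff_dvd]
        exact rel_piv a.1 v hv
      simpa [hψ] using this
    set ψ' : ((Fin N → ℤ) ⧸ R) →+ (↥A → ZMod p) := QuotientAddGroup.lift R ψ hker with hψ'
    have hsurj : Function.Surjective ψ := by
      intro f
      refine ⟨fun m => if h : m ∈ A then ((f ⟨m, h⟩).val : ℤ) else 0, ?_⟩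
      funext a
      have h1 : piv p R a.1 ∉ A := piv_not_mem_Aset a.1
      simp only [hψ, AddMonoidHom.mk'_apply]
      rw [dif_pos a.2, dif_neg h1]
      push_cast
      simp [ZMod.natCast_val, ZMod.cast_id, Subtype.coe_eta]
    have hsurj' : Function.Surjective ψ' := by
      intro f
      obtain ⟨v, hv⟩ := hsurj f
      exact ⟨QuotientAddGroup.mk v, hv⟩
    set Q' := Q.image ψ' with hQ'
    have hclos : AddSubgroup.closure (↑Q' : Set (↥A → ZMod p)) = ⊤ := by
      rw [hQ', Finset.coe_image, ← AddMonoidHom.map_closure, hQ]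
      exact AddSubgroup.map_top_of_surjective ψ' hsurj'
    have hspan : Submodule.span (ZMod p) (↑Q' : Set (↥A → ZMod p)) = ⊤ := by
      rw [eq_top_iff]
      intro x _
      have hx : x ∈ AddSubgroup.closure (↑Q' : Set (↥A → ZMod p)) := by
        rw [hclos]; trivial
      exact (AddSubgroup.closure_le ((Submodule.span (ZMod p) (↑Q' : Set (↥A → ZMod p))).toAddSubgroup)).mpr
        Submodule.subset_span hx
    have h1 : A.card = Module.finrank (ZMod p) (↥A → ZMod p) := by
      rw [Module.finrank_pi]
      simp [Fintype.card_coe]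
    have h2 : Module.finrank (ZMod p) (↥A → ZMod p) ≤ Q'.card := by
      have h3 := finrank_span_le_card (R := ZMod p) (↑Q' : Set (↥A → ZMod p))
      rw [hspan, finrank_top] at h3
      simpa using h3
    calc A.card = Module.finrank (ZMod p) (↥A → ZMod p) := h1
      _ ≤ Q'.card := h2
      _ ≤ Q.card := Finset.card_image_le

lemma rankEq_unique {k k' : ℕ} (h : RankEq R k) (h' : RankEq R k') : k = k' := by
  obtain ⟨⟨s, hs, hst⟩, hge⟩ := h
  obtain ⟨⟨s', hs', hst'⟩, hge'⟩ := h'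
  have h1 := hge s' hst'
  have h2 := hge' s hst
  omega


section Lower

variable {n k : ℕ} [NeZero n] {p e : ℕ}

/-- projection onto coordinates T (in order) with 0 appended at the last slot -/
noncomputable def piT (T : Finset (Fin n)) (hT : T.card = k) : (Fin n → ℤ) →+ (Fin (k+1) → ℤ) :=
  AddMonoidHom.mk'
    (fun v j => Fin.lastCases (motive := fun _ => ℤ) (v 0)
      (fun jj => v ((T.orderIsoOfFin hT jj : Fin n))) j)
    (by
      intro u v; funext j
      induction j using Fin.lastCases <;> simp)

lemma piT_apply_last (T : Finset (Fin n)) (hT : T.card = k) (v : Fin n → ℤ) :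
    piT T hT v (Fin.last k) = v 0 := by
  simp [piT]

lemma piT_apply_castSucc (T : Finset (Fin n)) (hT : T.card = k) (v : Fin n → ℤ) (jj : Fin k) :
    piT T hT v jj.castSucc = v ((T.orderIsoOfFin hT jj : Fin n)) := by
  simp [piT]

lemma piT_mul (T : Finset (Fin n)) (hT : T.card = k) (u v : Fin n → ℤ) :
    piT T hT (u * v) = piT T hT u * piT T hT v := by
  funext j
  induction j using Fin.lastCases with
  | last => simp [piT_apply_last]
  | cast jj => simp [piT_apply_castSucc]

lemma piT_one (T : Finset (Fin n)) (hT : T.card = k) :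
    piT T hT (1 : Fin n → ℤ) = 1 := by
  funext j
  induction j using Fin.lastCases with
  | last => simp [piT_apply_last]
  | cast jj => simp [piT_apply_castSucc]

lemma piT_surjective (T : Finset (Fin n)) (hT : T.card = k) (h0 : (0 : Fin n) ∉ T) :
    Function.Surjective (piT T hT) := by
  intro w
  refine ⟨fun i => if h : i ∈ T then w ((T.orderIsoOfFin hT).symm ⟨i, h⟩).castSucc
    else w (Fin.last k), ?_⟩
  funext j
  induction j using Fin.lastCases with
  | last => rw [piT_apply_last, dif_neg h0]
  | cast jj =>
    rw [piT_apply_castSucc, dif_pos (T.orderIsoOfFin hT jj).2]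
    congr 1
    have : (⟨((T.orderIsoOfFin hT jj : Fin n)), (T.orderIsoOfFin hT jj).2⟩ :
        {x // x ∈ T}) = T.orderIsoOfFin hT jj := rfl
    rw [this, OrderIso.symm_apply_apply]

/-- the subring of Z^n obtained from S by pulling back -/
noncomputable def RT (T : Finset (Fin n)) (hT : T.card = k)
    (S : AddSubgroup (Fin (k+1) → ℤ)) : AddSubgroup (Fin n → ℤ) :=
  AddSubgroup.comap (piT T hT) S

variable {T : Finset (Fin n)} {hT : T.card = k} {S : AddSubgroup (Fin (k+1) → ℤ)}

lemma RT_subring (hS : IsSubringOf S) : IsSubringOf (RT T hT S) := by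
  constructor
  · show piT T hT (fun _ => (1:ℤ)) ∈ S
    have : (fun _ => (1:ℤ) : Fin n → ℤ) = 1 := rfl
    rw [this, piT_one]
    exact hS.1
  · intro u v hu hv
    show piT T hT (u * v) ∈ S
    rw [piT_mul]
    exact hS.2 _ _ hu hv

lemma RT_index (h0 : (0 : Fin n) ∉ T) : (RT T hT S).index = S.index :=
  AddSubgroup.index_comap_of_surjective S (piT_surjective T hT h0)

lemma single_mem_RT {j : Fin n} (hj : j ∉ T) (hj0 : j ≠ 0) :
    Pi.single j (1:ℤ) ∈ RT T hT S := by
  show piT T hT (Pi.single j (1:ℤ)) ∈ S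
  have : piT T hT (Pi.single j (1:ℤ)) = 0 := by
    funext a
    induction a using Fin.lastCases with
    | last =>
      rw [piT_apply_last, Pi.single_eq_of_ne (Ne.symm hj0)]
      rfl
    | cast jj =>
      rw [piT_apply_castSucc, Pi.single_eq_of_ne]
      · rfl
      · intro hc
        exact hj (hc ▸ (T.orderIsoOfFin hT jj).2)
  rw [this]
  exact S.zero_mem

lemma single_not_mem_RT (hp : p.Prime) (h0 : (0 : Fin n) ∉ T)
    (hSirr : ∀ v ∈ S, ∀ a b : Fin (k+1), (p : ℤ) ∣ v a - v b)
    {j : Fin n} (hj : j ∈ T) : Pi.single j (1:ℤ) ∉ RT T hT S := by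
  intro hc
  have h1 := hSirr _ hc (((T.orderIsoOfFin hT).symm ⟨j, hj⟩).castSucc) (Fin.last k)
  rw [piT_apply_castSucc, piT_apply_last, OrderIso.apply_symm_apply] at h1
  have hj0 : (0 : Fin n) ≠ j := by rintro rfl; exact h0 hj
  rw [Pi.single_eq_same, Pi.single_eq_of_ne hj0, sub_zero] at h1
  have h2 := Int.le_of_dvd one_pos h1
  have := hp.one_lt
  omega

lemma RT_rel_of_mem (hSirr : ∀ v ∈ S, ∀ a b : Fin (k+1), (p : ℤ) ∣ v a - v b)
    {i j : Fin n} (hi : i = 0 ∨ i ∈ T) (hj : j = 0 ∨ j ∈ T) :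
    Rel p (RT T hT S) i j := by
  intro v hv
  have hv' : piT T hT v ∈ S := hv
  have hcoord : ∀ i : Fin n, (i = 0 ∨ i ∈ T) → ∃ a, piT T hT v a = v i := by
    rintro i (rfl | hi)
    · exact ⟨Fin.last k, piT_apply_last T hT v⟩
    · refine ⟨((T.orderIsoOfFin hT).symm ⟨i, hi⟩).castSucc, ?_⟩
      rw [piT_apply_castSucc, OrderIso.apply_symm_apply]
  obtain ⟨a, ha⟩ := hcoord i hi
  obtain ⟨b, hb⟩ := hcoord j hj
  have := hSirr _ hv' a b
  rwa [ha, hb] at this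

lemma RT_not_rel (hp : p.Prime) {i j : Fin n} (hiT : i ∉ T) (hi0 : i ≠ 0) (hij : j ≠ i) :
    ¬ Rel p (RT T hT S) i j := by
  intro hc
  have h1 := hc _ (single_mem_RT hiT hi0)
  rw [Pi.single_eq_same, Pi.single_eq_of_ne hij, sub_zero] at h1
  have h2 := Int.le_of_dvd one_pos h1
  have := hp.one_lt
  omega

lemma RT_rankEq (hp : p.Prime) (he : 1 ≤ e) (h0 : (0:Fin n) ∉ T) (hS : IsSubringOf S)
    (hSidx : S.index = p ^ e)
    (hSirr : ∀ v ∈ S, ∀ a b : Fin (k+1), (p:ℤ) ∣ v a - v b) :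
    RankEq (RT T hT S) k := by
  have hRidx : (RT T hT S).index = p ^ e := (RT_index h0).trans hSidx
  have hmain := rankEq_Aset_card hp he (RT_subring hS) hRidx
  set T' : Finset (Fin n) := insert 0 T with hT'
  have hmem : ∀ i : Fin n, i ∈ T' ↔ (i = 0 ∨ i ∈ T) := by intro i; simp [hT']
  have hcls1 : ∀ i ∈ T', cls p (RT T hT S) i = T' := by
    intro i hi
    ext j
    simp only [mem_cls, hmem]
    constructor
    · intro hrel
      by_contra hj
      push_neg at hj
      exact RT_not_rel hp hj.2 hj.1 (fun hc => ((hmem i).mp hi).elim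
        (fun h1 => hj.1 (hc ▸ h1)) (fun h1 => hj.2 (hc ▸ h1))) hrel.symm
    · intro hj
      exact RT_rel_of_mem hSirr ((hmem i).mp hi) hj
  have hcls2 : ∀ i, i ∉ T' → cls p (RT T hT S) i = {i} := by
    intro i hi
    have hi' : ¬ (i = 0 ∨ i ∈ T) := fun hc => hi ((hmem i).mpr hc)
    push_neg at hi'
    ext j
    simp only [mem_cls, Finset.mem_singleton]
    constructor
    · intro hrel
      by_contra hj
      exact RT_not_rel hp hi'.2 hi'.1 hj hrel
    · rintro rfl
      exact rel_refl _ _ _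
  have hne : T'.Nonempty := ⟨0, by simp [hT']⟩
  set M := T'.max' hne with hM
  have hMT' : M ∈ T' := T'.max'_mem hne
  have hAset : Aset p (RT T hT S) = T'.erase M := by
    ext i
    simp only [Aset, mem_filter, mem_univ, true_and, mem_erase]
    by_cases hi : i ∈ T'
    · have hpivi : piv p (RT T hT S) i = M := by
        unfold piv
        simp only [hcls1 i hi, hM]
      rw [hpivi]
      constructor
      · intro h; exact ⟨fun hc => h hc.symm, hi⟩
      · intro h hc; exact h.1 hc.symm
    · have hpivi : piv p (RT T hT S) i = i := by
        unfold piv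
        simp only [hcls2 i hi, Finset.max'_singleton]
      rw [hpivi]
      simp only [ne_eq, not_true_eq_false, false_iff, not_and]
      intro _; exact fun hc => hi hc
  have hcard : (Aset p (RT T hT S)).card = k := by
    rw [hAset, Finset.card_erase_of_mem hMT', hT', Finset.card_insert_of_notMem h0, hT]
    omega
  rwa [hcard] at hmain

lemma RT_recover_T (hp : p.Prime) (h0 : (0:Fin n) ∉ T)
    (hSirr : ∀ v ∈ S, ∀ a b : Fin (k+1), (p:ℤ) ∣ v a - v b) :
    T = univ.filter (fun j => j ≠ 0 ∧ Pi.single j (1:ℤ) ∉ RT T hT S) := by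
  ext j
  simp only [mem_filter, mem_univ, true_and]
  constructor
  · intro hj
    exact ⟨fun hc => h0 (hc ▸ hj), single_not_mem_RT hp h0 hSirr hj⟩
  · rintro ⟨hj0, hjm⟩
    by_contra hjT
    exact hjm (single_mem_RT hjT hj0)

lemma RT_recover_S (h0 : (0:Fin n) ∉ T) : AddSubgroup.map (piT T hT) (RT T hT S) = S :=
  AddSubgroup.map_comap_eq_self_of_surjective (piT_surjective T hT h0) S

end Lower

section Upper

variable {n k : ℕ} {p e : ℕ} {R : AddSubgroup (Fin n → ℤ)}

/-- gluing homomorphism -/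
noncomputable def tau (A : Finset (Fin n)) (hA : A.card = k) : (Fin (k+1) → ℤ) →+ (Fin n → ℤ) :=
  AddMonoidHom.mk'
    (fun w i => if h : i ∈ A then w ((A.orderIsoOfFin hA).symm ⟨i, h⟩).castSucc
      else w (Fin.last k))
    (by intro u v; funext i; by_cases h : i ∈ A <;> simp [h])

lemma tau_apply_mem {A : Finset (Fin n)} {hA : A.card = k} {i : Fin n} (h : i ∈ A)
    (w : Fin (k+1) → ℤ) :
    tau A hA w i = w ((A.orderIsoOfFin hA).symm ⟨i, h⟩).castSucc := by
  simp only [tau, AddMonoidHom.mk'_apply]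
  rw [dif_pos h]

lemma tau_apply_not_mem {A : Finset (Fin n)} {hA : A.card = k} {i : Fin n} (h : i ∉ A)
    (w : Fin (k+1) → ℤ) : tau A hA w i = w (Fin.last k) := by
  simp only [tau, AddMonoidHom.mk'_apply]
  rw [dif_neg h]

lemma tau_mul {A : Finset (Fin n)} {hA : A.card = k} (u v : Fin (k+1) → ℤ) :
    tau A hA (u * v) = tau A hA u * tau A hA v := by
  funext i
  by_cases h : i ∈ A
  · simp only [tau_apply_mem h, Pi.mul_apply]
  · simp only [tau_apply_not_mem h, Pi.mul_apply]

lemma tau_one {A : Finset (Fin n)} {hA : A.card = k} :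
    tau A hA (1 : Fin (k+1) → ℤ) = 1 := by
  funext i
  by_cases h : i ∈ A
  · simp only [tau_apply_mem h, Pi.one_apply]
  · simp only [tau_apply_not_mem h, Pi.one_apply]

lemma SG_subring {A : Finset (Fin n)} {hA : A.card = k} (hR : IsSubringOf R) :
    IsSubringOf (AddSubgroup.comap (tau A hA) R) := by
  constructor
  · show tau A hA (fun _ => (1:ℤ)) ∈ R
    have h1 : (fun _ => (1:ℤ) : Fin (k+1) → ℤ) = 1 := rfl
    rw [h1, tau_one]
    exact one_mem hR
  · intro u v hu hv
    show tau A hA (u * v) ∈ R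
    rw [tau_mul]
    exact hR.2 _ _ hu hv

lemma SG_irreducible (hR : IsSubringOf R) {hA : (Aset p R).card = k} :
    ∀ w ∈ AddSubgroup.comap (tau (Aset p R) hA) R, ∀ a b : Fin (k+1),
      (p : ℤ) ∣ w a - w b := by
  intro w hw a b
  have hlast : ∀ a : Fin (k+1), (p:ℤ) ∣ w a - w (Fin.last k) := by
    intro a
    induction a using Fin.lastCases with
    | last => simp
    | cast jj =>
      set i : Fin n := ((Aset p R).orderIsoOfFin hA jj : Fin n) with hi
      have hiA : i ∈ Aset p R := ((Aset p R).orderIsoOfFin hA jj).2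
      have h1 := rel_piv (p := p) (R := R) i _ hw
      have h2 : tau (Aset p R) hA w i = w jj.castSucc := by
        rw [tau_apply_mem hiA]
        congr 2
        have : (⟨i, hiA⟩ : {x // x ∈ Aset p R}) = (Aset p R).orderIsoOfFin hA jj := by
          apply Subtype.ext; rfl
        rw [this, OrderIso.symm_apply_apply]
      have h3 : tau (Aset p R) hA w (piv p R i) = w (Fin.last k) :=
        tau_apply_not_mem (piv_not_mem_Aset i) w
      rw [h2, h3] at h1
      exact h1
  have ha := hlast a
  have hb := hlast b
  have := dvd_sub ha hb
  have h4 : w a - w (Fin.last k) - (w b - w (Fin.last k)) = w a - w b := by ring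
  rwa [h4] at this

lemma tau_range_sup (hp : p.Prime) (he : 1 ≤ e) (hR : IsSubringOf R)
    (hidx : R.index = p ^ e) (hA : (Aset p R).card = k) :
    (tau (Aset p R) hA).range ⊔ R = ⊤ := by
  rw [eq_top_iff]
  rintro v -
  rw [AddSubgroup.mem_sup]
  refine ⟨tau (Aset p R) hA (Fin.lastCases (motive := fun _ => ℤ) 0
      (fun jj => v (((Aset p R).orderIsoOfFin hA jj : Fin n)) -
        v (piv p R (((Aset p R).orderIsoOfFin hA jj : Fin n))))), ⟨_, rfl⟩,
    (∑ i ∈ pivSet p R, v i • ind p R i : Fin n → ℤ),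
    sum_mem (fun i _ => R.zsmul_mem (ind_mem hp he hR hidx i) _), ?_⟩
  funext m
  rw [Pi.add_apply, sum_smul_ind_apply]
  by_cases hm : m ∈ Aset p R
  · rw [tau_apply_mem hm]
    rw [Fin.lastCases_castSucc]
    have henum : (((Aset p R).orderIsoOfFin hA) (((Aset p R).orderIsoOfFin hA).symm ⟨m, hm⟩) :
        Fin n) = m := by rw [OrderIso.apply_symm_apply]
    rw [henum, sub_add_cancel]
  · rw [tau_apply_not_mem hm, Fin.lastCases_last]
    have hpm : piv p R m = m := by simpa [Aset] using hm
    rw [hpm, zero_add]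

lemma SG_index (hp : p.Prime) (he : 1 ≤ e) (hR : IsSubringOf R)
    (hidx : R.index = p ^ e) (hA : (Aset p R).card = k) :
    (AddSubgroup.comap (tau (Aset p R) hA) R).index = p ^ e := by
  rw [AddSubgroup.index_comap, ← AddSubgroup.relIndex_sup_right,
    tau_range_sup hp he hR hidx hA, AddSubgroup.relIndex_top_right, hidx]

/-- the injectivity workhorse : if two subrings have the same A-data, pivot data and glued
subring, then one is contained in the other -/
lemma upper_le (hp : p.Prime) (he : 1 ≤ e) {R1 R2 : AddSubgroup (Fin n → ℤ)}
    (hR1 : IsSubringOf R1) (hR2 : IsSubringOf R2)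
    (hidx1 : R1.index = p ^ e) (hidx2 : R2.index = p ^ e)
    {A : Finset (Fin n)} {hA : A.card = k}
    (hA1 : Aset p R1 = A) (hpiv : piv p R1 = piv p R2)
    (hSG : AddSubgroup.comap (tau A hA) R1 = AddSubgroup.comap (tau A hA) R2) :
    R1 ≤ R2 := by
  intro v hv
  have hrel : ∀ m i : Fin n, Rel p R1 m i ↔ Rel p R2 m i := fun m i => by
    rw [rel_iff_piv_eq, rel_iff_piv_eq, hpiv]
  have hpivSet : pivSet p R2 = pivSet p R1 := by
    simp only [pivSet, hpiv]
  have hkey : ∀ i ∈ pivSet p R2, mask p R2 i v ∈ R2 := by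
    intro i hi
    have hpivii : piv p R1 i = i := by
      rw [hpiv]
      simpa [pivSet] using hi
    set w : Fin (k+1) → ℤ := Fin.lastCases (motive := fun _ => ℤ) (v i)
      (fun jj => if Rel p R1 ((A.orderIsoOfFin hA jj : Fin n)) i
        then v ((A.orderIsoOfFin hA jj : Fin n)) else v i) with hw
    have htauw : ∀ m : Fin n, tau A hA w m = if Rel p R1 m i then v m else v i := by
      intro m
      by_cases hm : m ∈ A
      · rw [tau_apply_mem hm, hw, Fin.lastCases_castSucc]
        have henum : ((A.orderIsoOfFin hA) ((A.orderIsoOfFin hA).symm ⟨m, hm⟩) : Fin n) = m := by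
          rw [OrderIso.apply_symm_apply]
        rw [henum]
      · rw [tau_apply_not_mem hm, hw, Fin.lastCases_last]
        have hpm : piv p R1 m = m := by
          rw [← hA1] at hm; simpa [Aset] using hm
        by_cases hmi : m = i
        · subst hmi
          rw [if_pos (rel_refl p R1 m)]
        · have hnrel : ¬ Rel p R1 m i := by
            rw [rel_iff_piv_eq, hpm, hpivii]
            exact hmi
          rw [if_neg hnrel]
    have hτw1 : tau A hA w = mask p R1 i v + v i • ((1 : Fin n → ℤ) - ind p R1 i) := by
      funext m
      rw [htauw m, Pi.add_apply, Pi.smul_apply, Pi.sub_apply, Pi.one_apply, smul_eq_mul]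
      by_cases hrm : Rel p R1 m i
      · simp [mask, ind, hrm]
      · simp [mask, ind, hrm]
    have hτwR1 : tau A hA w ∈ R1 := by
      rw [hτw1]
      rw [← hA1] at hA
      exact R1.add_mem (mask_mem hp he hR1 hidx1 hv i)
        (R1.zsmul_mem (R1.sub_mem (one_mem hR1) (ind_mem hp he hR1 hidx1 i)) _)
    have hwSG : w ∈ AddSubgroup.comap (tau A hA) R1 := hτwR1
    rw [hSG] at hwSG
    have hτwR2 : tau A hA w ∈ R2 := hwSG
    have hmask2 : mask p R2 i v = tau A hA w * ind p R2 i := by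
      funext m
      rw [Pi.mul_apply, htauw m]
      by_cases hrm : Rel p R2 m i
      · have hrm1 : Rel p R1 m i := (hrel m i).mpr hrm
        simp [mask, ind, hrm, hrm1]
      · have hrm1 : ¬ Rel p R1 m i := fun hc => hrm ((hrel m i).mp hc)
        simp [mask, ind, hrm, hrm1]
    rw [hmask2]
    exact hR2.2 _ _ hτwR2 (ind_mem hp he hR2 hidx2 i)
  have hsum := sum_mask (p := p) (R := R2) v
  exact hsum ▸ sum_mem hkey

lemma top_not_mem_Aset (hn : 1 ≤ n) (htop : (n - 1 : ℕ) < n) :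
    (⟨n - 1, htop⟩ : Fin n) ∉ Aset p R := by
  set t : Fin n := ⟨n - 1, htop⟩ with ht
  have h1 : piv p R t = t := by
    apply le_antisymm
    · apply Finset.max'_le
      intro x _
      rw [Fin.le_def]
      have hx := x.isLt
      simp only [ht]
      omega
    · apply Finset.le_max'
      exact mem_cls.mpr (rel_refl p R t)
  simp [Aset, h1]

end Upper

section Helpers

lemma orderIsoOfFin_coe_congr {α : Type*} [LinearOrder α] {A B : Finset α} (h : A = B)
    {m : ℕ} (hA : A.card = m) (hB : B.card = m) (x : Fin m) :
    ((A.orderIsoOfFin hA x : α)) = (B.orderIsoOfFin hB x : α) := by subst h; rfl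

lemma tau_congr {n k : ℕ} {A B : Finset (Fin n)} (h : A = B) (hA : A.card = k)
    (hB : B.card = k) : tau A hA = tau B hB := by subst h; rfl

lemma finite_aux (N M : ℕ) [NeZero M] (P : AddSubgroup (Fin N → ℤ) → Prop)
    (hP : ∀ R, P R → R.index = M) :
    Finite {R : AddSubgroup (Fin N → ℤ) // P R} := by
  set c : (Fin N → ℤ) →+ (Fin N → ZMod M) := AddMonoidHom.mk'
    (fun v i => ((v i : ℤ) : ZMod M)) (by intro u v; funext i; simp) with hc
  have hker : ∀ R, P R → c.ker ≤ R := by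
    intro R hR v hv
    apply index_dvd_mem (R := R)
    intro m
    rw [hP R hR]
    have h0 : c v = 0 := AddMonoidHom.mem_ker.mp hv
    have h1 : ((v m : ℤ) : ZMod M) = 0 := by
      have := congrFun h0 m
      simpa [hc] using this
    rwa [ZMod.intCast_zmod_eq_zero_iff_dvd] at h1
  haveI : Finite (AddSubgroup (Fin N → ZMod M)) :=
    Finite.of_injective (fun H => (H : Set (Fin N → ZMod M))) SetLike.coe_injective
  apply Finite.of_injective (fun r : {R : AddSubgroup (Fin N → ℤ) // P R} =>
    AddSubgroup.map c r.1)
  intro r1 r2 h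
  apply Subtype.ext
  have h1 := congrArg (AddSubgroup.comap c) h
  rwa [AddSubgroup.comap_map_eq, AddSubgroup.comap_map_eq,
    sup_of_le_left (hker _ r1.2), sup_of_le_left (hker _ r2.2)] at h1

lemma card_avoid {N kk : ℕ} (x : Fin N) :
    Nat.card {A : Finset (Fin N) // A.card = kk ∧ x ∉ A} = (N - 1).choose kk := by
  classical
  have hequiv : {A : Finset (Fin N) // A.card = kk ∧ x ∉ A} ≃
      {A : Finset (Fin N) // A ∈ Finset.powersetCard kk (Finset.univ.erase x)} := by
    refine ⟨fun a => ⟨a.1, Finset.mem_powersetCard.mpr ⟨?_, a.2.1⟩⟩,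
      fun a => ⟨a.1, (Finset.mem_powersetCard.mp a.2).2, fun hc => ?_⟩,
      fun a => rfl, fun a => rfl⟩
    · intro i hi
      exact Finset.mem_erase.mpr ⟨fun hc => a.2.2 (hc ▸ hi), Finset.mem_univ i⟩
    · exact (Finset.mem_erase.mp ((Finset.mem_powersetCard.mp a.2).1 hc)).1 rfl
  rw [Nat.card_congr hequiv, Nat.card_eq_fintype_card, Fintype.card_coe,
    Finset.card_powersetCard, Finset.card_erase_of_mem (Finset.mem_univ x),
    Finset.card_univ, Fintype.card_fin]

end Helpers

end CK

open CK in
theorem corank_k_count_bounds (n k e p : ℕ) (hp : p.Prime)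
    (hk : 1 ≤ k) (hkn : k ≤ n - 1) (he : 1 ≤ e) :
    (n - 1).choose k *
      Nat.card {S : AddSubgroup (Fin (k + 1) → ℤ) // IsSubringOf S ∧ S.index = p ^ e ∧
        ∀ v ∈ S, ∀ i j : Fin (k + 1), (p : ℤ) ∣ v i - v j} ≤
      Nat.card {R : AddSubgroup (Fin n → ℤ) // IsSubringOf R ∧ R.index = p ^ e ∧
        RankEq R k} ∧
    Nat.card {R : AddSubgroup (Fin n → ℤ) // IsSubringOf R ∧ R.index = p ^ e ∧
        RankEq R k} ≤
      (n - k) ^ k * (n - 1).choose k *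
      Nat.card {S : AddSubgroup (Fin (k + 1) → ℤ) // IsSubringOf S ∧ S.index = p ^ e ∧
        ∀ v ∈ S, ∀ i j : Fin (k + 1), (p : ℤ) ∣ v i - v j} := by
  classical
  have hn2 : 2 ≤ n := by omega
  haveI : NeZero n := ⟨by omega⟩
  haveI : NeZero (p ^ e) := ⟨pow_ne_zero e hp.pos.ne'⟩
  have htoplt : (n - 1 : ℕ) < n := by omega
  haveI hfinR : Finite {R : AddSubgroup (Fin n → ℤ) // IsSubringOf R ∧ R.index = p ^ e ∧
      RankEq R k} := finite_aux n (p ^ e) _ (fun R h => h.2.1)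
  haveI hfinS : Finite {S : AddSubgroup (Fin (k + 1) → ℤ) // IsSubringOf S ∧ S.index = p ^ e ∧
      ∀ v ∈ S, ∀ i j : Fin (k + 1), (p : ℤ) ∣ v i - v j} :=
    finite_aux (k + 1) (p ^ e) _ (fun S h => h.2.1)
  constructor
  · -- lower bound
    rw [← card_avoid (0 : Fin n) (kk := k), ← Nat.card_prod]
    apply Nat.card_le_card_of_injective (fun TS :
        ({A : Finset (Fin n) // A.card = k ∧ (0 : Fin n) ∉ A} ×
         {S : AddSubgroup (Fin (k + 1) → ℤ) // IsSubringOf S ∧ S.index = p ^ e ∧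
          ∀ v ∈ S, ∀ i j : Fin (k + 1), (p : ℤ) ∣ v i - v j}) =>
      (⟨RT TS.1.1 TS.1.2.1 TS.2.1, RT_subring TS.2.2.1,
        (RT_index TS.1.2.2).trans TS.2.2.2.1,
        RT_rankEq hp he TS.1.2.2 TS.2.2.1 TS.2.2.2.1 TS.2.2.2.2⟩ :
        {R : AddSubgroup (Fin n → ℤ) // IsSubringOf R ∧ R.index = p ^ e ∧ RankEq R k}))
    rintro ⟨⟨T1, hT1, h01⟩, ⟨S1, hS1, hSidx1, hirr1⟩⟩ ⟨⟨T2, hT2, h02⟩, ⟨S2, hS2, hSidx2, hirr2⟩⟩ hG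
    simp only [Subtype.mk.injEq] at hG
    have hT : T1 = T2 := by
      rw [RT_recover_T (hT := hT1) (S := S1) hp h01 hirr1,
        RT_recover_T (hT := hT2) (S := S2) hp h02 hirr2, hG]
    subst hT
    have hS : S1 = S2 := by
      rw [← RT_recover_S (hT := hT1) (S := S1) h01, ← RT_recover_S (hT := hT2) (S := S2) h02, hG]
    subst hS
    rfl
  · -- upper bound
    have hcardfun : Nat.card (Fin k → Fin (n - k)) = (n - k) ^ k := by
      rw [Nat.card_eq_fintype_card, Fintype.card_fun, Fintype.card_fin, Fintype.card_fin]
    calc Nat.card {R : AddSubgroup (Fin n → ℤ) // IsSubringOf R ∧ R.index = p ^ e ∧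
          RankEq R k}
        ≤ Nat.card (({A : Finset (Fin n) // A.card = k ∧ (⟨n - 1, htoplt⟩ : Fin n) ∉ A} ×
            (Fin k → Fin (n - k))) ×
          {S : AddSubgroup (Fin (k + 1) → ℤ) // IsSubringOf S ∧ S.index = p ^ e ∧
            ∀ v ∈ S, ∀ i j : Fin (k + 1), (p : ℤ) ∣ v i - v j}) := ?_
      _ = (n - k) ^ k * (n - 1).choose k *
          Nat.card {S : AddSubgroup (Fin (k + 1) → ℤ) // IsSubringOf S ∧ S.index = p ^ e ∧
            ∀ v ∈ S, ∀ i j : Fin (k + 1), (p : ℤ) ∣ v i - v j} := by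
          rw [Nat.card_prod, Nat.card_prod, card_avoid, hcardfun]; ring
    apply Nat.card_le_card_of_injective (fun r :
        {R : AddSubgroup (Fin n → ℤ) // IsSubringOf R ∧ R.index = p ^ e ∧ RankEq R k} =>
      ((⟨Aset p r.1,
          rankEq_unique (rankEq_Aset_card hp he r.2.1 r.2.2.1) r.2.2.2,
          top_not_mem_Aset (by omega) htoplt⟩,
        fun j => (((Aset p r.1)ᶜ).orderIsoOfFin
            (by rw [Finset.card_compl, Fintype.card_fin,
              rankEq_unique (rankEq_Aset_card hp he r.2.1 r.2.2.1) r.2.2.2])).symm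
          ⟨piv p r.1 (((Aset p r.1).orderIsoOfFin
              (rankEq_unique (rankEq_Aset_card hp he r.2.1 r.2.2.1) r.2.2.2) j : Fin n)),
            Finset.mem_compl.mpr (piv_not_mem_Aset _)⟩),
       ⟨AddSubgroup.comap (tau (Aset p r.1)
            (rankEq_unique (rankEq_Aset_card hp he r.2.1 r.2.2.1) r.2.2.2)) r.1,
        SG_subring r.2.1,
        SG_index hp he r.2.1 r.2.2.1 _,
        SG_irreducible r.2.1⟩))
    rintro ⟨R1, hR1, hidx1, hrk1⟩ ⟨R2, hR2, hidx2, hrk2⟩ hG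
    have hA1 : (Aset p R1).card = k := rankEq_unique (rankEq_Aset_card hp he hR1 hidx1) hrk1
    have hA2 : (Aset p R2).card = k := rankEq_unique (rankEq_Aset_card hp he hR2 hidx2) hrk2
    have hc1 : ((Aset p R1)ᶜ).card = n - k := by
      rw [Finset.card_compl, Fintype.card_fin, hA1]
    have hc2 : ((Aset p R2)ᶜ).card = n - k := by
      rw [Finset.card_compl, Fintype.card_fin, hA2]
    have hAeq : Aset p R1 = Aset p R2 := by
      have := congrArg (fun x => x.1.1.1) hG
      simpa using this
    have hfeq := congrArg (fun x => x.1.2) hG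
    have hSeq := congrArg (fun x => x.2.1) hG
    simp only at hfeq hSeq
    have hpiv : piv p R1 = piv p R2 := by
      funext i
      by_cases hi : i ∈ Aset p R1
      · set j : Fin k := ((Aset p R1).orderIsoOfFin hA1).symm ⟨i, hi⟩ with hj
        have h1 : (((Aset p R1).orderIsoOfFin hA1 j : Fin n)) = i := by
          rw [hj, OrderIso.apply_symm_apply]
        have h2 : (((Aset p R2).orderIsoOfFin hA2 j : Fin n)) = i := by
          rw [← orderIsoOfFin_coe_congr hAeq hA1 hA2 j, h1]
        have h3 := congrFun hfeq j
        have h5 := congrArg (fun x => ((((Aset p R1)ᶜ).orderIsoOfFin hc1) x : Fin n)) h3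
        simp only [OrderIso.apply_symm_apply] at h5
        rw [orderIsoOfFin_coe_congr (congrArg (·ᶜ) hAeq) hc1 hc2] at h5
        simp only [OrderIso.apply_symm_apply] at h5
        rw [h1, h2] at h5
        exact h5
      · have hi2 : i ∉ Aset p R2 := hAeq ▸ hi
        have hp1 : piv p R1 i = i := by simpa [Aset] using hi
        have hp2 : piv p R2 i = i := by simpa [Aset] using hi2
        rw [hp1, hp2]
    have hSG : AddSubgroup.comap (tau (Aset p R1) hA1) R1 =
        AddSubgroup.comap (tau (Aset p R1) hA1) R2 := by
      rw [hSeq, tau_congr hAeq.symm hA2 hA1]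
    have hR12 : R1 = R2 := le_antisymm
      (upper_le hp he hR1 hR2 hidx1 hidx2 rfl hpiv hSG)
      (upper_le hp he hR2 hR1 hidx2 hidx1 hAeq.symm hpiv.symm hSG.symm)
    exact Subtype.ext hR12
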